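/- Let M ∈ ℝ^{n×c} and suppose M = U₁ Σ V₁ᵀ is a compact singular value decomposition: U₁ ∈ ℝ^{n×s} and V₁ ∈ ℝ^{c×s} have orthonormal columns (U₁ᵀU₁ = I_s and V₁ᵀV₁ = I_s) and Σ ∈ ℝ^{s×s} is diagonal with strictly positive diagonal entries. Then U₁V₁ᵀ is a subgradient of the nuclear norm at M; that is, for every matrix D ∈ ℝ^{n×c}, ‖D‖_* ≥ ‖M‖_* + trace((U₁V₁ᵀ)ᵀ (D − M)). -/

import Mathlib

open Matrix

/-- The nuclear norm of a real matrix `M`: the trace of the positive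
semidefinite square root of `Mᵀ * M`. -/
noncomputable def nuclearNorm {m n : Type*} [Fintype m] [Fintype n] [DecidableEq n]
    (M : Matrix m n ℝ) : ℝ :=
  ((Matrix.posSemidef_conjTranspose_mul_self M).1.eigenvectorUnitary.1 *
    diagonal ((RCLike.ofReal ∘ (√·) ∘ (Matrix.posSemidef_conjTranspose_mul_self M).1.eigenvalues : n → ℝ)) *
    (star (Matrix.posSemidef_conjTranspose_mul_self M).1.eigenvectorUnitary : Matrix n n ℝ)).trace

lemma entry_transpose_mul {a b : ℕ} (X Y : Matrix (Fin a) (Fin b) ℝ) (i : Fin b) :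
    (Xᵀ * Y) i i = ∑ k, X k i * Y k i := by simp [mul_apply]

lemma conj_diag_nonneg {c c' : ℕ} {Q : Matrix (Fin c) (Fin c) ℝ} (hQ : Q.PosSemidef)
    (X : Matrix (Fin c) (Fin c') ℝ) (i : Fin c') : 0 ≤ (Xᵀ * Q * X) i i := by
  have h := hQ.dotProduct_mulVec_nonneg (fun k => X k i)
  simp only [star_trivial, dotProduct, mulVec, Finset.mul_sum] at h
  have : (Xᵀ * Q * X) i i = ∑ k, ∑ j, X k i * (Q k j * X j i) := by
    simp [mul_apply, Finset.sum_mul, mul_assoc]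
    rw [Finset.sum_comm]
  rw [this]; exact h

/-- Core inequality: if `W` is orthogonal and diagonalizes `DᵀD` with eigenvalues `eig`,
and `1 - GᵀG` is PSD, then `trace (Gᵀ D) ≤ ∑ √(eig i)`. -/
lemma trace_le_sum_sqrt {n c : ℕ} (G D : Matrix (Fin n) (Fin c) ℝ)
    (W : Matrix (Fin c) (Fin c) ℝ) (eig : Fin c → ℝ)
    (hWW : Wᵀ * W = 1) (hWW' : W * Wᵀ = 1)
    (hspec : Wᵀ * (Dᵀ * D) * W = diagonal eig)
    (hG : (1 - Gᵀ * G).PosSemidef) :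
    (Gᵀ * D).trace ≤ ∑ i, Real.sqrt (eig i) := by
  have htr : (Gᵀ * D).trace = ∑ i, ((G * W)ᵀ * (D * W)) i i := by
    have h1 : (G * W)ᵀ * (D * W) = Wᵀ * (Gᵀ * (D * W)) := by
      rw [Matrix.transpose_mul]; simp only [Matrix.mul_assoc]
    have h2 : ∑ i, ((G * W)ᵀ * (D * W)) i i = (Wᵀ * (Gᵀ * (D * W))).trace := by
      rw [h1]; rfl
    rw [h2, Matrix.trace_mul_comm (Wᵀ) (Gᵀ * (D * W))]
    simp only [Matrix.mul_assoc]
    rw [hWW', Matrix.mul_one]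
  rw [htr]
  apply Finset.sum_le_sum
  intro i _
  rw [entry_transpose_mul]
  have hcs := Real.sum_mul_le_sqrt_mul_sqrt Finset.univ (fun k => (G * W) k i)
    (fun k => (D * W) k i)
  refine hcs.trans ?_
  have hDsum : ∑ k, (D * W) k i ^ 2 = eig i := by
    have e1 : ∑ k, (D * W) k i ^ 2 = ((D * W)ᵀ * (D * W)) i i := by
      rw [entry_transpose_mul]; simp [sq]
    have e2 : (D * W)ᵀ * (D * W) = Wᵀ * (Dᵀ * D) * W := by
      rw [Matrix.transpose_mul]; simp only [Matrix.mul_assoc]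
    rw [e1, e2, hspec, diagonal_apply_eq]
  have hGsum : ∑ k, (G * W) k i ^ 2 ≤ 1 := by
    have e1 : ∑ k, (G * W) k i ^ 2 = ((G * W)ᵀ * (G * W)) i i := by
      rw [entry_transpose_mul]; simp [sq]
    have e2 : Wᵀ * (1 - Gᵀ * G) * W = Wᵀ * W - (G * W)ᵀ * (G * W) := by
      rw [Matrix.mul_sub, Matrix.sub_mul, Matrix.mul_one, Matrix.transpose_mul]
      simp only [Matrix.mul_assoc]
    have h3 : (Wᵀ * W) i i = 1 := by rw [hWW, Matrix.one_apply_eq]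
    have h4 := conj_diag_nonneg hG W i
    rw [e2, Matrix.sub_apply, h3] at h4
    rw [e1]; linarith
  calc Real.sqrt (∑ k, (G * W) k i ^ 2) * Real.sqrt (∑ k, (D * W) k i ^ 2)
      ≤ 1 * Real.sqrt (eig i) := by
        rw [hDsum]
        exact mul_le_mul_of_nonneg_right (Real.sqrt_le_one.2 hGsum) (Real.sqrt_nonneg _)
    _ = Real.sqrt (eig i) := one_mul _

lemma trace_le_nuclearNorm {n c : ℕ} (G D : Matrix (Fin n) (Fin c) ℝ)
    (hG : (1 - Gᵀ * G).PosSemidef) : (Gᵀ * D).trace ≤ nuclearNorm D := by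
  have hD := Matrix.posSemidef_conjTranspose_mul_self D
  have hH := hD.1
  have hWmem := hH.eigenvectorUnitary.prop
  have hstar : star (hH.eigenvectorUnitary : Matrix (Fin c) (Fin c) ℝ)
      = (hH.eigenvectorUnitary : Matrix (Fin c) (Fin c) ℝ)ᵀ := by
    rw [Matrix.star_eq_conjTranspose, conjTranspose_eq_transpose_of_trivial]
  have hWW : (hH.eigenvectorUnitary : Matrix (Fin c) (Fin c) ℝ)ᵀ
      * (hH.eigenvectorUnitary : Matrix (Fin c) (Fin c) ℝ) = 1 := by
    rw [← hstar]; exact (Unitary.mem_iff.mp hWmem).1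
  have hWW' : (hH.eigenvectorUnitary : Matrix (Fin c) (Fin c) ℝ)
      * (hH.eigenvectorUnitary : Matrix (Fin c) (Fin c) ℝ)ᵀ = 1 := by
    rw [← hstar]; exact (Unitary.mem_iff.mp hWmem).2
  have hDT : (Dᵀ : Matrix (Fin c) (Fin n) ℝ) = Dᴴ :=
    (conjTranspose_eq_transpose_of_trivial D).symm
  have hspec : (hH.eigenvectorUnitary : Matrix (Fin c) (Fin c) ℝ)ᵀ * (Dᵀ * D)
      * (hH.eigenvectorUnitary : Matrix (Fin c) (Fin c) ℝ) = diagonal hH.eigenvalues := by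
    have h : star (hH.eigenvectorUnitary : Matrix (Fin c) (Fin c) ℝ) * (Dᴴ * D)
        * (hH.eigenvectorUnitary : Matrix (Fin c) (Fin c) ℝ)
        = diagonal (RCLike.ofReal ∘ hH.eigenvalues) := by
      have key := hH.spectral_theorem
      rw [Unitary.conjStarAlgAut_apply] at key
      refine (congrArg (fun A => star (hH.eigenvectorUnitary : Matrix (Fin c) (Fin c) ℝ) * A
        * (hH.eigenvectorUnitary : Matrix (Fin c) (Fin c) ℝ)) key).trans ?_
      simp only [← Matrix.mul_assoc, Matrix.UnitaryGroup.star_mul_self, Matrix.one_mul]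
      simp only [Matrix.mul_assoc, Matrix.UnitaryGroup.star_mul_self, Matrix.mul_one]
    rw [hstar] at h
    rw [hDT, h, RCLike.ofReal_real_eq_id, Function.id_comp]
  have hnuc : nuclearNorm D = ∑ i, Real.sqrt (hH.eigenvalues i) := by
    rw [nuclearNorm, trace_mul_cycle]
    rw [Matrix.UnitaryGroup.star_mul_self, Matrix.one_mul, trace_diagonal]
    simp [RCLike.ofReal_real_eq_id]
  rw [hnuc]
  exact trace_le_sum_sqrt G D _ hH.eigenvalues hWW hWW' hspec hG

theorem subgradient_of_nuclearNorm_of_compact_svd (n c s : ℕ)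
    (M : Matrix (Fin n) (Fin c) ℝ)
    (U₁ : Matrix (Fin n) (Fin s) ℝ) (V₁ : Matrix (Fin c) (Fin s) ℝ)
    (Sig : Matrix (Fin s) (Fin s) ℝ)
    (hU : U₁ᵀ * U₁ = 1) (hV : V₁ᵀ * V₁ = 1)
    (hSigDiag : ∀ i j : Fin s, i ≠ j → Sig i j = 0)
    (hSigPos : ∀ i : Fin s, 0 < Sig i i)
    (hM : M = U₁ * Sig * V₁ᵀ) :
    ∀ D : Matrix (Fin n) (Fin c) ℝ,
      nuclearNorm M + ((U₁ * V₁ᵀ)ᵀ * (D - M)).trace ≤ nuclearNorm D := by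
  intro D
  have hVVV : V₁ * V₁ᵀ * (V₁ * V₁ᵀ) = V₁ * V₁ᵀ := by
    calc V₁ * V₁ᵀ * (V₁ * V₁ᵀ) = V₁ * (V₁ᵀ * V₁) * V₁ᵀ := by simp only [Matrix.mul_assoc]
    _ = V₁ * V₁ᵀ := by rw [hV, Matrix.mul_one]
  -- G = U₁ V₁ᵀ satisfies 1 - GᵀG PSD
  have hGtG : (U₁ * V₁ᵀ)ᵀ * (U₁ * V₁ᵀ) = V₁ * V₁ᵀ := by
    rw [Matrix.transpose_mul, Matrix.transpose_transpose]
    calc V₁ * U₁ᵀ * (U₁ * V₁ᵀ) = V₁ * (U₁ᵀ * U₁) * V₁ᵀ := by simp only [Matrix.mul_assoc]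
    _ = V₁ * V₁ᵀ := by rw [hU, Matrix.mul_one]
  have hG : (1 - (U₁ * V₁ᵀ)ᵀ * (U₁ * V₁ᵀ)).PosSemidef := by
    rw [hGtG]
    have h1 : (1 - V₁ * V₁ᵀ)ᴴ * (1 - V₁ * V₁ᵀ) = 1 - V₁ * V₁ᵀ := by
      rw [conjTranspose_eq_transpose_of_trivial, Matrix.transpose_sub, Matrix.transpose_one,
        Matrix.transpose_mul, Matrix.transpose_transpose, Matrix.sub_mul, Matrix.mul_sub,
        Matrix.mul_sub, Matrix.one_mul, Matrix.mul_one, hVVV]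
      simp only [Matrix.one_mul]
      abel
    have := Matrix.posSemidef_conjTranspose_mul_self (1 - V₁ * V₁ᵀ)
    rwa [h1] at this
  -- Sig is a diagonal matrix
  have hSigD : Sig = diagonal (fun i => Sig i i) := by
    ext i j
    by_cases h : i = j
    · subst h; simp
    · rw [diagonal_apply_ne _ h]; exact hSigDiag i j h
  have hSigT : Sigᵀ = Sig := by rw [hSigD, diagonal_transpose]
  set N₀ : Matrix (Fin c) (Fin c) ℝ := V₁ * Sig * V₁ᵀ with hN₀def
  have hN₀ : N₀.PosSemidef := by
    have hd : (diagonal (fun i => Sig i i)).PosSemidef :=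
      Matrix.posSemidef_diagonal_iff.mpr fun i => (hSigPos i).le
    have := hd.mul_mul_conjTranspose_same V₁
    rwa [conjTranspose_eq_transpose_of_trivial, ← hSigD] at this
  have hsq : N₀ ^ 2 = Mᴴ * M := by
    rw [hM, conjTranspose_eq_transpose_of_trivial, pow_two, hN₀def]
    rw [Matrix.transpose_mul, Matrix.transpose_mul, Matrix.transpose_transpose, hSigT]
    calc V₁ * Sig * V₁ᵀ * (V₁ * Sig * V₁ᵀ)
        = V₁ * Sig * (V₁ᵀ * V₁) * (Sig * V₁ᵀ) := by simp only [Matrix.mul_assoc]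
      _ = V₁ * Sig * (Sig * V₁ᵀ) := by rw [hV, Matrix.mul_one]
      _ = V₁ * Sig * (U₁ᵀ * U₁) * (Sig * V₁ᵀ) := by rw [hU, Matrix.mul_one]
      _ = V₁ᵀᵀ * (Sig * U₁ᵀ) * (U₁ * Sig * V₁ᵀ) := by
          rw [Matrix.transpose_transpose]; simp only [Matrix.mul_assoc]
  have hsqrt : (Matrix.posSemidef_conjTranspose_mul_self M).1.eigenvectorUnitary.1 *
      diagonal ((RCLike.ofReal ∘ (√·) ∘
        (Matrix.posSemidef_conjTranspose_mul_self M).1.eigenvalues : Fin c → ℝ)) *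
      (star (Matrix.posSemidef_conjTranspose_mul_self M).1.eigenvectorUnitary :
        Matrix (Fin c) (Fin c) ℝ) = N₀ := by
    have e := (Matrix.posSemidef_conjTranspose_mul_self M).1.cfc_eq Real.sqrt
    rw [Matrix.IsHermitian.cfc, Unitary.conjStarAlgAut_apply] at e
    rw [← e, ← hsq]
    have hsa : IsSelfAdjoint N₀ := hN₀.1
    rw [← cfc_pow_id (R := ℝ) N₀ 2 hsa, ← cfc_comp' Real.sqrt (fun x : ℝ => x ^ 2) N₀]
    conv_rhs => rw [← cfc_id' ℝ N₀ hsa]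
    apply cfc_congr
    intro x hx
    rw [hN₀.1.spectrum_real_eq_range_eigenvalues] at hx
    obtain ⟨i, rfl⟩ := hx
    exact Real.sqrt_sq (hN₀.eigenvalues_nonneg i)
  have hnucM : nuclearNorm M = N₀.trace := by rw [nuclearNorm, hsqrt]
  have hGM : (U₁ * V₁ᵀ)ᵀ * M = N₀ := by
    rw [hM, Matrix.transpose_mul, Matrix.transpose_transpose, hN₀def]
    calc V₁ * U₁ᵀ * (U₁ * Sig * V₁ᵀ) = V₁ * (U₁ᵀ * U₁) * (Sig * V₁ᵀ) := by
          simp only [Matrix.mul_assoc]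
      _ = V₁ * (Sig * V₁ᵀ) := by rw [hU, Matrix.mul_one]
      _ = V₁ * Sig * V₁ᵀ := by simp only [Matrix.mul_assoc]
  have hsplit : ((U₁ * V₁ᵀ)ᵀ * (D - M)).trace
      = ((U₁ * V₁ᵀ)ᵀ * D).trace - N₀.trace := by
    rw [Matrix.mul_sub, Matrix.trace_sub, hGM]
  have hkey := trace_le_nuclearNorm (U₁ * V₁ᵀ) D hG
  rw [hnucM, hsplit]
  linarith
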